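/- For small categories A and B there is an adjunction M ⊣ R between the category of spans of asymmetric lenses SpnLens(A,B) and the category of symmetric lenses SymLens(A,B), where R sends a symmetric lens (X⁺, X⁻ over X₀) to the span of lenses with apex the image X̃ of the jointly-fully-faithful factorization of ⟨g₀, f₀⟩ : X₀ → A × B, and M R = 1; thus SymLens(A,B) is a reflective subcategory of SpnLens(A,B). -/

import Mathlib

open CategoryTheory

universe w v u v₁ u₁ v₂ u₂ v₃ u₃

section Helpers

/-- The hom-type of a category structure, given explicitly. -/
def homOf {C : Type u₁} (cc : Category.{v₁} C) (x y : C) : Type v₁ :=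
  @Quiver.Hom C cc.toCategoryStruct.toQuiver x y

/-- Object part of a functor, with explicit category structures. -/
def objOf {C : Type u₁} {D : Type u₂} (cc : Category.{v₁} C) (cd : Category.{v₂} D)
    (F : @Functor C cc D cd) : C → D := F.obj

/-- Morphism part of a functor, with explicit category structures. -/
def mapOf {C : Type u₁} {D : Type u₂} (cc : Category.{v₁} C) (cd : Category.{v₂} D)
    (F : @Functor C cc D cd) {x y : C} (u : homOf cc x y) :
    homOf cd (objOf cc cd F x) (objOf cc cd F y) := F.map u

/-- Discrete opfibration: every morphism out of the image of an object has a unique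
lift with that source. -/
def IsDiscreteOpfibration {X : Type u₁} {Y : Type u₂} (cx : Category.{v₁} X)
    (cy : Category.{v₂} Y) (F : @Functor X cx Y cy) : Prop :=
  ∀ (x : X) (y : Y) (u : homOf cy (objOf cx cy F x) y),
    ∃! t : (Σ x' : X, homOf cx x x'),
      objOf cx cy F t.1 = y ∧ HEq (mapOf cx cy F t.2) u

/-- Fully faithful, as a property. -/
def IsFullyFaithfulP {X : Type u₁} {Y : Type u₂} (cx : Category.{v₁} X)
    (cy : Category.{v₂} Y) (F : @Functor X cx Y cy) : Prop :=
  ∀ (x x' : X) (u : homOf cy (objOf cx cy F x) (objOf cx cy F x')),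
    ∃! w : homOf cx x x', mapOf cx cy F w = u

end Helpers
/-- An asymmetric delta lens `A ⇌ B`: a Get functor together with a Put operation
lifting morphisms of `B` out of `get.obj a` to morphisms of `A` out of `a`, satisfying
the PutGet, GetPut and PutPut laws. -/
structure Lens (A : Type u₁) (B : Type u₂) [Category.{v₁} A] [Category.{v₂} B] where
  get : A ⥤ B
  tgt : ∀ (a : A) {b : B}, (get.obj a ⟶ b) → A
  put : ∀ (a : A) {b : B} (u : get.obj a ⟶ b), a ⟶ tgt a u
  obj_tgt : ∀ (a : A) {b : B} (u : get.obj a ⟶ b), get.obj (tgt a u) = b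
  putget : ∀ (a : A) {b : B} (u : get.obj a ⟶ b), HEq (get.map (put a u)) u
  tgt_id : ∀ a : A, tgt a (𝟙 (get.obj a)) = a
  getput : ∀ a : A, HEq (put a (𝟙 (get.obj a))) (𝟙 a)
  tgt_comp : ∀ (a : A) {b c : B} (u : get.obj a ⟶ b) (v : b ⟶ c)
    (v' : get.obj (tgt a u) ⟶ c), HEq v' v → tgt a (u ≫ v) = tgt (tgt a u) v'
  putput : ∀ (a : A) {b c : B} (u : get.obj a ⟶ b) (v : b ⟶ c)
    (v' : get.obj (tgt a u) ⟶ c), HEq v' v →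
    HEq (put a (u ≫ v)) (put a u ≫ put (tgt a u) v')
/-- A Mealy morphism `A ⇸ B`: a span of functions `A ← X₀ → B` on a set `X₀` (a discrete
category) together with operations transporting a morphism of `A` out of `g₀ x` to a new
state `q x u ∈ X₀` over its codomain and an output morphism `f x u` in `B`. -/
structure Mealy (A : Type u₁) (B : Type u₂) [Category.{v₁} A] [Category.{v₂} B] where
  X₀ : Type u₁
  g₀ : X₀ → A
  f₀ : X₀ → B
  q : ∀ (x : X₀) {a : A}, (g₀ x ⟶ a) → X₀
  f : ∀ (x : X₀) {a : A} (u : g₀ x ⟶ a), f₀ x ⟶ f₀ (q x u)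
  g_q : ∀ (x : X₀) {a : A} (u : g₀ x ⟶ a), g₀ (q x u) = a
  q_id : ∀ x : X₀, q x (𝟙 (g₀ x)) = x
  f_id : ∀ x : X₀, HEq (f x (𝟙 (g₀ x))) (𝟙 (f₀ x))
  q_comp : ∀ (x : X₀) {a a' : A} (u : g₀ x ⟶ a) (v : a ⟶ a')
    (v' : g₀ (q x u) ⟶ a'), HEq v' v → q x (u ≫ v) = q (q x u) v'
  f_comp : ∀ (x : X₀) {a a' : A} (u : g₀ x ⟶ a) (v : a ⟶ a')
    (v' : g₀ (q x u) ⟶ a'), HEq v' v →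
    HEq (f x (u ≫ v)) (f x u ≫ f (q x u) v')
section SymSpn

variable {A B : Type u} [Category.{v} A] [Category.{v} B]

/-- A map of Mealy morphisms: a function on states commuting with the legs of the spans
and with the transition and output operations. -/
@[ext] structure MealyHom (m₁ m₂ : Mealy A B) where
  toFun : m₁.X₀ → m₂.X₀
  g_comm : ∀ x, m₂.g₀ (toFun x) = m₁.g₀ x
  f_comm : ∀ x, m₂.f₀ (toFun x) = m₁.f₀ x
  q_comm : ∀ (x : m₁.X₀) (a : A) (u : m₁.g₀ x ⟶ a)
    (u' : m₂.g₀ (toFun x) ⟶ a), HEq u' u →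
    toFun (m₁.q x u) = m₂.q (toFun x) u'
  f_map_comm : ∀ (x : m₁.X₀) (a : A) (u : m₁.g₀ x ⟶ a)
    (u' : m₂.g₀ (toFun x) ⟶ a), HEq u' u →
    HEq (m₁.f x u) (m₂.f (toFun x) u')

/-- The identity map of Mealy morphisms. -/
def MealyHom.id (m : Mealy A B) : MealyHom m m where
  toFun := _root_.id
  g_comm _ := rfl
  f_comm _ := rfl
  q_comm := by intro x a u u' h; cases eq_of_heq h; rfl
  f_map_comm := by intro x a u u' h; cases eq_of_heq h; rfl

/-- Composition of maps of Mealy morphisms. -/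
def MealyHom.comp {m₁ m₂ m₃ : Mealy A B} (j : MealyHom m₁ m₂) (k : MealyHom m₂ m₃) :
    MealyHom m₁ m₃ where
  toFun := k.toFun ∘ j.toFun
  g_comm x := (k.g_comm _).trans (j.g_comm x)
  f_comm x := (k.f_comm _).trans (j.f_comm x)
  q_comm := by
    intro x a u u' h
    obtain ⟨u'', h2⟩ : ∃ u'' : m₂.g₀ (j.toFun x) ⟶ a, HEq u'' u :=
      ⟨cast (by rw [j.g_comm x]) u, cast_heq _ _⟩
    show k.toFun (j.toFun (m₁.q x u)) = _
    rw [j.q_comm x a u u'' h2, k.q_comm (j.toFun x) a u'' u' (h.trans h2.symm)]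
    rfl
  f_map_comm := by
    intro x a u u' h
    obtain ⟨u'', h2⟩ : ∃ u'' : m₂.g₀ (j.toFun x) ⟶ a, HEq u'' u :=
      ⟨cast (by rw [j.g_comm x]) u, cast_heq _ _⟩
    exact (j.f_map_comm x a u u'' h2).trans
      (k.f_map_comm (j.toFun x) a u'' u' (h.trans h2.symm))

/-- A symmetric lens from `A` to `B`: a pair of Mealy morphisms `A ⇸ B` and `B ⇸ A`
sharing the same set of states (correspondences), whose underlying spans of functions
agree. -/
structure SymLensObj (A B : Type u) [Category.{v} A] [Category.{v} B] where
  mealyAB : Mealy A B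
  mealyBA : Mealy B A
  obj_eq : mealyBA.X₀ = mealyAB.X₀
  to_base : ∀ x, mealyBA.f₀ x = mealyAB.g₀ (cast obj_eq x)
  to_fiber : ∀ x, mealyBA.g₀ x = mealyAB.f₀ (cast obj_eq x)

/-- A morphism of symmetric lenses: a pair of maps of Mealy morphisms agreeing on
states. -/
@[ext] structure SymLensHom (S T : SymLensObj A B) where
  homP : MealyHom S.mealyAB T.mealyAB
  homM : MealyHom S.mealyBA T.mealyBA
  compat : ∀ x, cast T.obj_eq (homM.toFun x) = homP.toFun (cast S.obj_eq x)

/-- The category `SymLens(A, B)` of symmetric lenses from `A` to `B`. -/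
instance SymLensObj.category : Category.{u} (SymLensObj A B) where
  Hom := SymLensHom
  id S := ⟨MealyHom.id _, MealyHom.id _, fun _ => rfl⟩
  comp j k := ⟨j.homP.comp k.homP, j.homM.comp k.homM,
    fun x => (k.compat _).trans (congrArg k.homP.toFun (j.compat x))⟩
  id_comp f := by apply SymLensHom.ext <;> apply MealyHom.ext <;> rfl
  comp_id f := by apply SymLensHom.ext <;> apply MealyHom.ext <;> rfl
  assoc f g h := by apply SymLensHom.ext <;> apply MealyHom.ext <;> rfl

/-- A span of asymmetric lenses from `A` to `B`. -/
structure SpnLensObj (A B : Type u) [Category.{v} A] [Category.{v} B] where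
  X : Type u
  [instX : Category.{v} X]
  left : Lens X A
  right : Lens X B

attribute [instance] SpnLensObj.instX

/-- A morphism of spans of lenses: a functor between the apexes which is simultaneously
a morphism in `Lens(A)` between the left legs and a morphism in `Lens(B)` between the
right legs (i.e. commutes with the Gets and preserves the Puts). -/
@[ext] structure SpnLensHom (S T : SpnLensObj A B) where
  h : S.X ⥤ T.X
  left_comm : h ⋙ T.left.get = S.left.get
  right_comm : h ⋙ T.right.get = S.right.get
  left_tgt : ∀ (x : S.X) (a : A) (u : S.left.get.obj x ⟶ a)
    (u' : T.left.get.obj (h.obj x) ⟶ a), HEq u' u →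
    h.obj (S.left.tgt x u) = T.left.tgt (h.obj x) u'
  left_put : ∀ (x : S.X) (a : A) (u : S.left.get.obj x ⟶ a)
    (u' : T.left.get.obj (h.obj x) ⟶ a), HEq u' u →
    HEq (h.map (S.left.put x u)) (T.left.put (h.obj x) u')
  right_tgt : ∀ (x : S.X) (b : B) (u : S.right.get.obj x ⟶ b)
    (u' : T.right.get.obj (h.obj x) ⟶ b), HEq u' u →
    h.obj (S.right.tgt x u) = T.right.tgt (h.obj x) u'
  right_put : ∀ (x : S.X) (b : B) (u : S.right.get.obj x ⟶ b)
    (u' : T.right.get.obj (h.obj x) ⟶ b), HEq u' u →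
    HEq (h.map (S.right.put x u)) (T.right.put (h.obj x) u')


/-- A functor preserves heterogeneous equality of morphisms with equal codomains. -/
theorem map_heq_of_heq {C D : Type u₁} [Category.{v₁} C] [Category.{v₁} D] (F : C ⥤ D)
    {x y y' : C} (h : y = y') {f : x ⟶ y} {g : x ⟶ y'} (hf : HEq f g) :
    HEq (F.map f) (F.map g) := by subst h; rw [eq_of_heq hf]

/-- The category `SpnLens(A, B)` of spans of asymmetric lenses from `A` to `B`. -/
instance SpnLensObj.category : Category.{max u v} (SpnLensObj A B) where
  Hom := SpnLensHom
  id S := { h := 𝟭 S.X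
            left_comm := S.left.get.id_comp
            right_comm := S.right.get.id_comp
            left_tgt := by intro x a u u' h; cases eq_of_heq h; rfl
            left_put := by intro x a u u' h; cases eq_of_heq h; rfl
            right_tgt := by intro x b u u' h; cases eq_of_heq h; rfl
            right_put := by intro x b u u' h; cases eq_of_heq h; rfl }
  comp := fun {S T U} j k =>
    { h := j.h ⋙ k.h
      left_comm := by rw [Functor.assoc, k.left_comm, j.left_comm]
      right_comm := by rw [Functor.assoc, k.right_comm, j.right_comm]
      left_tgt := by
        intro x a u u' hu
        obtain ⟨u'', h2⟩ : ∃ u'' : T.left.get.obj (j.h.obj x) ⟶ a, HEq u'' u :=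
          ⟨cast (by rw [show T.left.get.obj (j.h.obj x) = S.left.get.obj x from
            congrArg (fun F => F.obj x) j.left_comm]) u, cast_heq _ _⟩
        show k.h.obj (j.h.obj (S.left.tgt x u)) = _
        rw [j.left_tgt x a u u'' h2,
          k.left_tgt (j.h.obj x) a u'' u' (hu.trans h2.symm)]
        rfl
      left_put := by
        intro x a u u' hu
        obtain ⟨u'', h2⟩ : ∃ u'' : T.left.get.obj (j.h.obj x) ⟶ a, HEq u'' u :=
          ⟨cast (by rw [show T.left.get.obj (j.h.obj x) = S.left.get.obj x from
            congrArg (fun F => F.obj x) j.left_comm]) u, cast_heq _ _⟩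
        exact (map_heq_of_heq k.h (j.left_tgt x a u u'' h2)
            (j.left_put x a u u'' h2)).trans
          (k.left_put (j.h.obj x) a u'' u' (hu.trans h2.symm))
      right_tgt := by
        intro x b u u' hu
        obtain ⟨u'', h2⟩ : ∃ u'' : T.right.get.obj (j.h.obj x) ⟶ b, HEq u'' u :=
          ⟨cast (by rw [show T.right.get.obj (j.h.obj x) = S.right.get.obj x from
            congrArg (fun F => F.obj x) j.right_comm]) u, cast_heq _ _⟩
        show k.h.obj (j.h.obj (S.right.tgt x u)) = _
        rw [j.right_tgt x b u u'' h2,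
          k.right_tgt (j.h.obj x) b u'' u' (hu.trans h2.symm)]
        rfl
      right_put := by
        intro x b u u' hu
        obtain ⟨u'', h2⟩ : ∃ u'' : T.right.get.obj (j.h.obj x) ⟶ b, HEq u'' u :=
          ⟨cast (by rw [show T.right.get.obj (j.h.obj x) = S.right.get.obj x from
            congrArg (fun F => F.obj x) j.right_comm]) u, cast_heq _ _⟩
        exact (map_heq_of_heq k.h (j.right_tgt x b u u'' h2)
            (j.right_put x b u u'' h2)).trans
          (k.right_put (j.h.obj x) b u'' u' (hu.trans h2.symm)) }
  id_comp f := by apply SpnLensHom.ext; exact Functor.id_comp f.h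
  comp_id f := by apply SpnLensHom.ext; exact Functor.comp_id f.h
  assoc f g h := by apply SpnLensHom.ext; exact Functor.assoc f.h g.h h.h

/-- `M : SpnLens(A,B) → SymLens(A,B)` sends a span of lenses to the symmetric lens whose
set of correspondences is the set of objects of the apex, whose Mealy morphism `A ⇸ B`
has transitions given by the Put of the left leg and outputs given by applying the Get
of the right leg to the lifts, and dually for `B ⇸ A`. -/
def MDescr (M : @Functor (SpnLensObj A B) SpnLensObj.category
    (SymLensObj A B) SymLensObj.category) : Prop :=
  ∀ S : SpnLensObj A B,
    ∃ hP : (M.obj S).mealyAB.X₀ = S.X, ∃ hM : (M.obj S).mealyBA.X₀ = S.X,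
      (∀ x, (M.obj S).mealyAB.g₀ x = S.left.get.obj (cast hP x)) ∧
      (∀ x, (M.obj S).mealyAB.f₀ x = S.right.get.obj (cast hP x)) ∧
      (∀ (x : (M.obj S).mealyAB.X₀) (a : A) (u : (M.obj S).mealyAB.g₀ x ⟶ a)
        (u' : S.left.get.obj (cast hP x) ⟶ a), HEq u' u →
        cast hP ((M.obj S).mealyAB.q x u) = S.left.tgt (cast hP x) u' ∧
        HEq ((M.obj S).mealyAB.f x u)
          (S.right.get.map (S.left.put (cast hP x) u'))) ∧
      (∀ x, (M.obj S).mealyBA.g₀ x = S.right.get.obj (cast hM x)) ∧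
      (∀ x, (M.obj S).mealyBA.f₀ x = S.left.get.obj (cast hM x)) ∧
      (∀ (x : (M.obj S).mealyBA.X₀) (b : B) (u : (M.obj S).mealyBA.g₀ x ⟶ b)
        (u' : S.right.get.obj (cast hM x) ⟶ b), HEq u' u →
        cast hM ((M.obj S).mealyBA.q x u) = S.right.tgt (cast hM x) u' ∧
        HEq ((M.obj S).mealyBA.f x u)
          (S.left.get.map (S.right.put (cast hM x) u')))

end SymSpn

/-- Description of the functor `SymLens(A,B) → SpnLens(A,B)` built from the bo-ff
factorisation of `⟨g₀, f₀⟩ : X₀ → A × B`: the apex `X̃` has the correspondences as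
objects, its two Get functors act as `g₀` and `f₀` on objects and are jointly fully
faithful (`X̃` is the image of `⟨g₀, f₀⟩`), the Put of the left leg is the
identity-on-objects functor `σ : X⁺ → X̃`, and the Put of the right leg is
`τ : X⁻ → X̃`. -/
def ImageSpanDescr {A B : Type u} [Category.{v} A] [Category.{v} B]
    (R : SymLensObj A B ⥤ SpnLensObj A B) : Prop :=
  ∀ S : SymLensObj A B,
    ∃ h : (R.obj S).X = S.mealyAB.X₀,
      (∀ x, (R.obj S).left.get.obj x = S.mealyAB.g₀ (cast h x)) ∧
      (∀ x, (R.obj S).right.get.obj x = S.mealyAB.f₀ (cast h x)) ∧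
      (∀ (x y : (R.obj S).X) (u : (R.obj S).left.get.obj x ⟶ (R.obj S).left.get.obj y)
        (v : (R.obj S).right.get.obj x ⟶ (R.obj S).right.get.obj y),
        ∃! w : x ⟶ y, (R.obj S).left.get.map w = u ∧ (R.obj S).right.get.map w = v) ∧
      (∀ (x : (R.obj S).X) (a : A) (u : (R.obj S).left.get.obj x ⟶ a)
        (u' : S.mealyAB.g₀ (cast h x) ⟶ a), HEq u' u →
        cast h ((R.obj S).left.tgt x u) = S.mealyAB.q (cast h x) u' ∧
        HEq ((R.obj S).right.get.map ((R.obj S).left.put x u))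
          (S.mealyAB.f (cast h x) u')) ∧
      (∀ (x : (R.obj S).X) (b : B) (u : (R.obj S).right.get.obj x ⟶ b)
        (u' : S.mealyBA.g₀ (cast (h.trans S.obj_eq.symm) x) ⟶ b), HEq u' u →
        cast h ((R.obj S).right.tgt x u) =
          cast S.obj_eq (S.mealyBA.q (cast (h.trans S.obj_eq.symm) x) u') ∧
        HEq ((R.obj S).left.get.map ((R.obj S).right.put x u))
          (S.mealyBA.f (cast (h.trans S.obj_eq.symm) x) u'))
namespace SLProof

theorem cast_cast_eq {α β : Sort u₁} (h : α = β) (x : β) : cast h (cast h.symm x) = x := by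
  subst h; rfl

theorem cast_symm_cast {α β : Sort u₁} (h : α = β) (x : α) : cast h.symm (cast h x) = x := by
  subst h; rfl

theorem id_heq {C : Type u₁} [Category.{v₁} C] {x y : C} (h : x = y) : HEq (𝟙 x) (𝟙 y) := by
  subst h; rfl

theorem functor_map_heq {C : Type u₁} {D : Type u₂} [Category.{v₁} C] [Category.{v₂} D]
    {F G : C ⥤ D} (h : F = G) {x y : C} (f : x ⟶ y) : HEq (F.map f) (G.map f) := by
  subst h; rfl

theorem _root_.Mealy.q_congr {A : Type u₁} {B : Type u₂} [Category.{v₁} A] [Category.{v₂} B]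
    (m : Mealy A B) {x x' : m.X₀} (hx : x = x') {a a' : A} (ha : a = a')
    {u : m.g₀ x ⟶ a} {u' : m.g₀ x' ⟶ a'} (hu : HEq u u') : m.q x u = m.q x' u' := by
  subst hx; subst ha; cases hu; rfl

theorem _root_.Mealy.f_congr {A : Type u₁} {B : Type u₂} [Category.{v₁} A] [Category.{v₂} B]
    (m : Mealy A B) {x x' : m.X₀} (hx : x = x') {a a' : A} (ha : a = a')
    {u : m.g₀ x ⟶ a} {u' : m.g₀ x' ⟶ a'} (hu : HEq u u') : HEq (m.f x u) (m.f x' u') := by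
  subst hx; subst ha; cases hu; rfl

theorem _root_.Lens.tgt_congr {C : Type u₁} {D : Type u₂} [Category.{v₁} C] [Category.{v₂} D]
    (l : Lens C D) (x : C) {a a' : D} (ha : a = a')
    {u : l.get.obj x ⟶ a} {u' : l.get.obj x ⟶ a'} (hu : HEq u u') : l.tgt x u = l.tgt x u' := by
  subst ha; cases hu; rfl

theorem _root_.Lens.put_congr {C : Type u₁} {D : Type u₂} [Category.{v₁} C] [Category.{v₂} D]
    (l : Lens C D) (x : C) {a a' : D} (ha : a = a')
    {u : l.get.obj x ⟶ a} {u' : l.get.obj x ⟶ a'} (hu : HEq u u') :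
    HEq (l.put x u) (l.put x u') := by
  subst ha; cases hu; rfl

variable {A B : Type u} [Category.{v} A] [Category.{v} B]

/-! ### The image category `X̃` -/

def Tilde (S : SymLensObj A B) : Type u := S.mealyAB.X₀

instance tildeCat (S : SymLensObj A B) : Category.{v} (Tilde S) where
  Hom x y := (S.mealyAB.g₀ x ⟶ S.mealyAB.g₀ y) × (S.mealyAB.f₀ x ⟶ S.mealyAB.f₀ y)
  id x := (𝟙 _, 𝟙 _)
  comp f g := (f.1 ≫ g.1, f.2 ≫ g.2)
  id_comp f := by apply Prod.ext <;> simp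
  comp_id f := by apply Prod.ext <;> simp
  assoc f g h := by apply Prod.ext <;> simp

theorem tilde_hom_heq {S : SymLensObj A B} {x x' y y' : Tilde S} (hx : x = x') (hy : y = y')
    {f : x ⟶ y} {g : x' ⟶ y'} (h1 : HEq f.1 g.1) (h2 : HEq f.2 g.2) : HEq f g := by
  subst hx; subst hy
  exact heq_of_eq (Prod.ext (eq_of_heq h1) (eq_of_heq h2))

theorem tilde_hom_heq_fst {S : SymLensObj A B} {x x' y y' : Tilde S} (hx : x = x') (hy : y = y')
    {f : x ⟶ y} {g : x' ⟶ y'} (h : HEq f g) : HEq f.1 g.1 := by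
  subst hx; subst hy; cases h; rfl

theorem tilde_hom_heq_snd {S : SymLensObj A B} {x x' y y' : Tilde S} (hx : x = x') (hy : y = y')
    {f : x ⟶ y} {g : x' ⟶ y'} (h : HEq f g) : HEq f.2 g.2 := by
  subst hx; subst hy; cases h; rfl

/-! Casting between the two state sets. -/

def up (S : SymLensObj A B) (y : S.mealyBA.X₀) : Tilde S := cast S.obj_eq y

def dn (S : SymLensObj A B) (x : Tilde S) : S.mealyBA.X₀ := cast S.obj_eq.symm x

theorem up_dn (S : SymLensObj A B) (x : Tilde S) : up S (dn S x) = x := cast_cast_eq _ _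

theorem dn_up (S : SymLensObj A B) (y : S.mealyBA.X₀) : dn S (up S y) = y := cast_symm_cast _ _

theorem hgf (S : SymLensObj A B) (x : Tilde S) :
    S.mealyBA.g₀ (dn S x) = S.mealyAB.f₀ x :=
  (S.to_fiber _).trans (congrArg _ (up_dn S x))

theorem hfg (S : SymLensObj A B) (x : Tilde S) :
    S.mealyBA.f₀ (dn S x) = S.mealyAB.g₀ x :=
  (S.to_base _).trans (congrArg _ (up_dn S x))

theorem up_g (S : SymLensObj A B) (y : S.mealyBA.X₀) :
    S.mealyBA.g₀ y = S.mealyAB.f₀ (up S y) := S.to_fiber y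

theorem up_f (S : SymLensObj A B) (y : S.mealyBA.X₀) :
    S.mealyBA.f₀ y = S.mealyAB.g₀ (up S y) := S.to_base y

/-! ### The two legs of `R S` -/

def leftGet (S : SymLensObj A B) : Tilde S ⥤ A where
  obj := S.mealyAB.g₀
  map f := f.1
  map_id _ := rfl
  map_comp _ _ := rfl

def rightGet (S : SymLensObj A B) : Tilde S ⥤ B where
  obj := S.mealyAB.f₀
  map f := f.2
  map_id _ := rfl
  map_comp _ _ := rfl

def leftLens (S : SymLensObj A B) : Lens (Tilde S) A where
  get := leftGet S
  tgt := fun x {_} u => S.mealyAB.q x u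
  put := fun x {_} u => (u ≫ eqToHom (S.mealyAB.g_q x u).symm, S.mealyAB.f x u)
  obj_tgt := fun x {_} u => S.mealyAB.g_q x u
  putget := fun x {_} u => comp_eqToHom_heq u _
  tgt_id := S.mealyAB.q_id
  getput x := by
    refine tilde_hom_heq rfl (S.mealyAB.q_id x) ?_ (S.mealyAB.f_id x)
    exact comp_eqToHom_heq _ _
  tgt_comp := fun x {_ _} u v v' hv => S.mealyAB.q_comp x u v v' hv
  putput := fun x {_ _} u v v' hv => by
    refine tilde_hom_heq rfl (S.mealyAB.q_comp x u v v' hv) ?_ (S.mealyAB.f_comp x u v v' hv)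
    refine (comp_eqToHom_heq _ _).trans (HEq.symm ?_)
    exact heq_comp rfl (S.mealyAB.g_q x u) (S.mealyAB.g_q _ v')
      (comp_eqToHom_heq _ _) ((comp_eqToHom_heq _ _).trans hv)

theorem robj_tgt (S : SymLensObj A B) (x : Tilde S) {b : B}
    (u : S.mealyAB.f₀ x ⟶ b) :
    S.mealyAB.f₀ (up S (S.mealyBA.q (dn S x) (eqToHom (hgf S x) ≫ u))) = b :=
  (up_g S _).symm.trans (S.mealyBA.g_q _ _)

theorem rq_comp (S : SymLensObj A B) (x : Tilde S) {b c : B}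
    (u : S.mealyAB.f₀ x ⟶ b) (v : b ⟶ c) :
    S.mealyBA.q (dn S x) (eqToHom (hgf S x) ≫ (u ≫ v)) =
      S.mealyBA.q (S.mealyBA.q (dn S x) (eqToHom (hgf S x) ≫ u))
        (eqToHom (S.mealyBA.g_q _ _) ≫ v) := by
  have h : eqToHom (hgf S x) ≫ (u ≫ v) = (eqToHom (hgf S x) ≫ u) ≫ v := by simp
  rw [h]
  exact S.mealyBA.q_comp (dn S x) _ v _ (eqToHom_comp_heq _ _)

theorem rtgt_comp (S : SymLensObj A B) (x : Tilde S) {b c : B}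
    (u : S.mealyAB.f₀ x ⟶ b) (v : b ⟶ c)
    (v' : S.mealyAB.f₀ (up S (S.mealyBA.q (dn S x) (eqToHom (hgf S x) ≫ u))) ⟶ c)
    (hv : HEq v' v) :
    up S (S.mealyBA.q (dn S x) (eqToHom (hgf S x) ≫ (u ≫ v))) =
      up S (S.mealyBA.q (dn S (up S (S.mealyBA.q (dn S x) (eqToHom (hgf S x) ≫ u))))
        (eqToHom (hgf S _) ≫ v')) := by
  refine congrArg (up S) ((rq_comp S x u v).trans ?_)
  refine S.mealyBA.q_congr (dn_up S _).symm rfl ?_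
  exact (eqToHom_comp_heq _ _).trans ((hv.symm).trans (eqToHom_comp_heq _ _).symm)

def rightLens (S : SymLensObj A B) : Lens (Tilde S) B where
  get := rightGet S
  tgt := fun x {_} u => up S (S.mealyBA.q (dn S x) (eqToHom (hgf S x) ≫ u))
  put := fun x {_} u =>
    (eqToHom (hfg S x).symm ≫ S.mealyBA.f (dn S x) (eqToHom (hgf S x) ≫ u) ≫
        eqToHom (up_f S _),
      u ≫ eqToHom (robj_tgt S x u).symm)
  obj_tgt := fun x {_} u => robj_tgt S x u
  putget := fun x {_} u => comp_eqToHom_heq u _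
  tgt_id x := by
    have h1 : S.mealyBA.q (dn S x) (eqToHom (hgf S x) ≫ 𝟙 ((rightGet S).obj x)) = dn S x := by
      refine (S.mealyBA.q_congr rfl (hgf S x).symm ?_).trans (S.mealyBA.q_id _)
      exact (eqToHom_comp_heq _ _).trans (id_heq (hgf S x).symm)
    rw [h1, up_dn]
  getput x := by
    have h1 : S.mealyBA.q (dn S x) (eqToHom (hgf S x) ≫ 𝟙 ((rightGet S).obj x)) = dn S x := by
      refine (S.mealyBA.q_congr rfl (hgf S x).symm ?_).trans (S.mealyBA.q_id _)
      exact (eqToHom_comp_heq _ _).trans (id_heq (hgf S x).symm)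
    refine tilde_hom_heq rfl (by rw [h1, up_dn]) ?_ (comp_eqToHom_heq _ _)
    show HEq (eqToHom _ ≫ S.mealyBA.f (dn S x) _ ≫ eqToHom _) (𝟙 (S.mealyAB.g₀ x))
    refine (eqToHom_comp_heq _ _).trans ((comp_eqToHom_heq _ _).trans ?_)
    refine (S.mealyBA.f_congr rfl (hgf S x).symm
      ((eqToHom_comp_heq _ _).trans (id_heq (hgf S x).symm))).trans ?_
    exact (S.mealyBA.f_id _).trans (id_heq (hfg S x))
  tgt_comp := fun x {_ _} u v v' hv => rtgt_comp S x u v v' hv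
  putput := fun x {b c} u v v' hv => by
    refine tilde_hom_heq rfl (rtgt_comp S x u v v' hv) ?_ ?_
    · -- first components
      have harg : HEq (eqToHom (hgf S x) ≫ (u ≫ v)) ((eqToHom (hgf S x) ≫ u) ≫ v) :=
        heq_of_eq (Category.assoc _ _ _).symm
      have hmid : HEq (S.mealyBA.f (dn S x) (eqToHom (hgf S x) ≫ (u ≫ v)))
          (S.mealyBA.f (dn S x) (eqToHom (hgf S x) ≫ u) ≫
            S.mealyBA.f (S.mealyBA.q (dn S x) (eqToHom (hgf S x) ≫ u))
              (eqToHom (S.mealyBA.g_q _ _) ≫ v)) := by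
        refine (S.mealyBA.f_congr rfl rfl harg).trans ?_
        exact S.mealyBA.f_comp (dn S x) _ v _ (eqToHom_comp_heq _ _)
      have hsecond : HEq (S.mealyBA.f (S.mealyBA.q (dn S x) (eqToHom (hgf S x) ≫ u))
            (eqToHom (S.mealyBA.g_q _ _) ≫ v))
          (S.mealyBA.f (dn S (up S (S.mealyBA.q (dn S x) (eqToHom (hgf S x) ≫ u))))
            (eqToHom (hgf S _) ≫ v')) := by
        refine S.mealyBA.f_congr (dn_up S _).symm rfl ?_
        exact (eqToHom_comp_heq _ _).trans ((hv.symm).trans (eqToHom_comp_heq _ _).symm)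
      refine (eqToHom_comp_heq _ _).trans ((comp_eqToHom_heq _ _).trans ?_)
      have hqeq : S.mealyBA.q (S.mealyBA.q (dn S x) (eqToHom (hgf S x) ≫ u))
            (eqToHom (S.mealyBA.g_q _ _) ≫ v) =
          S.mealyBA.q (dn S (up S (S.mealyBA.q (dn S x) (eqToHom (hgf S x) ≫ u))))
            (eqToHom (hgf S _) ≫ v') :=
        S.mealyBA.q_congr (dn_up S _).symm rfl
          ((eqToHom_comp_heq _ _).trans ((hv.symm).trans (eqToHom_comp_heq _ _).symm))
      refine hmid.trans ?_
      refine heq_comp (hfg S x) (up_f S _)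
        ((congrArg S.mealyBA.f₀ hqeq).trans (up_f S _)) ?_ ?_
      · exact ((eqToHom_comp_heq _ _).trans (comp_eqToHom_heq _ _)).symm
      · exact hsecond.trans ((eqToHom_comp_heq _ _).trans (comp_eqToHom_heq _ _)).symm
    · -- second components
      refine (comp_eqToHom_heq _ _).trans (HEq.symm ?_)
      exact heq_comp rfl (robj_tgt S x u) (robj_tgt S _ v')
        (comp_eqToHom_heq _ _) ((comp_eqToHom_heq _ _).trans hv)

def RObj (S : SymLensObj A B) : SpnLensObj A B :=
  { X := Tilde S, left := leftLens S, right := rightLens S }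

end SLProof
namespace SLProof

variable {A B : Type u} [Category.{v} A] [Category.{v} B]

/-! ### The functor `M` -/

def MObjAB (S : SpnLensObj A B) : Mealy A B where
  X₀ := S.X
  g₀ := S.left.get.obj
  f₀ := S.right.get.obj
  q := fun x {_} u => S.left.tgt x u
  f := fun x {_} u => S.right.get.map (S.left.put x u)
  g_q := fun x {_} u => S.left.obj_tgt x u
  q_id := S.left.tgt_id
  f_id x := (map_heq_of_heq S.right.get (S.left.tgt_id x) (S.left.getput x)).trans
    (heq_of_eq (S.right.get.map_id x))
  q_comp := fun x {_ _} u v v' hv => S.left.tgt_comp x u v v' hv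
  f_comp := fun x {_ _} u v v' hv =>
    (map_heq_of_heq S.right.get (S.left.tgt_comp x u v v' hv)
      (S.left.putput x u v v' hv)).trans (heq_of_eq (S.right.get.map_comp _ _))

def MObjBA (S : SpnLensObj A B) : Mealy B A where
  X₀ := S.X
  g₀ := S.right.get.obj
  f₀ := S.left.get.obj
  q := fun x {_} u => S.right.tgt x u
  f := fun x {_} u => S.left.get.map (S.right.put x u)
  g_q := fun x {_} u => S.right.obj_tgt x u
  q_id := S.right.tgt_id
  f_id x := (map_heq_of_heq S.left.get (S.right.tgt_id x) (S.right.getput x)).trans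
    (heq_of_eq (S.left.get.map_id x))
  q_comp := fun x {_ _} u v v' hv => S.right.tgt_comp x u v v' hv
  f_comp := fun x {_ _} u v v' hv =>
    (map_heq_of_heq S.left.get (S.right.tgt_comp x u v v' hv)
      (S.right.putput x u v v' hv)).trans (heq_of_eq (S.left.get.map_comp _ _))

def MObj (S : SpnLensObj A B) : SymLensObj A B where
  mealyAB := MObjAB S
  mealyBA := MObjBA S
  obj_eq := rfl
  to_base _ := rfl
  to_fiber _ := rfl

def MHomAB {S T : SpnLensObj A B} (j : S ⟶ T) : MealyHom (MObjAB S) (MObjAB T) where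
  toFun := j.h.obj
  g_comm x := Functor.congr_obj j.left_comm x
  f_comm x := Functor.congr_obj j.right_comm x
  q_comm x a u u' hu := j.left_tgt x a u u' hu
  f_map_comm x a u u' hu :=
    (functor_map_heq j.right_comm.symm (S.left.put x u)).trans
      (map_heq_of_heq T.right.get (j.left_tgt x a u u' hu) (j.left_put x a u u' hu))

def MHomBA {S T : SpnLensObj A B} (j : S ⟶ T) : MealyHom (MObjBA S) (MObjBA T) where
  toFun := j.h.obj
  g_comm x := Functor.congr_obj j.right_comm x
  f_comm x := Functor.congr_obj j.left_comm x
  q_comm x b u u' hu := j.right_tgt x b u u' hu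
  f_map_comm x b u u' hu :=
    (functor_map_heq j.left_comm.symm (S.right.put x u)).trans
      (map_heq_of_heq T.left.get (j.right_tgt x b u u' hu) (j.right_put x b u u' hu))

def MF : SpnLensObj A B ⥤ SymLensObj A B where
  obj := MObj
  map j := ⟨MHomAB j, MHomBA j, fun _ => rfl⟩
  map_id S := by apply SymLensHom.ext <;> apply MealyHom.ext <;> rfl
  map_comp f g := by apply SymLensHom.ext <;> apply MealyHom.ext <;> rfl

/-! ### The functor `R` -/

def RHomFunctor {S T : SymLensObj A B} (j : S ⟶ T) : Tilde S ⥤ Tilde T where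
  obj := j.homP.toFun
  map {x y} m := (eqToHom (j.homP.g_comm x) ≫ m.1 ≫ eqToHom (j.homP.g_comm y).symm,
    eqToHom (j.homP.f_comm x) ≫ m.2 ≫ eqToHom (j.homP.f_comm y).symm)
  map_id x := by
    apply Prod.ext
    · show eqToHom _ ≫ 𝟙 _ ≫ eqToHom _ = 𝟙 _
      simp
    · show eqToHom _ ≫ 𝟙 _ ≫ eqToHom _ = 𝟙 _
      simp
  map_comp {x y z} m n := by
    apply Prod.ext
    · show eqToHom _ ≫ (m.1 ≫ n.1) ≫ eqToHom _ =
        (eqToHom _ ≫ m.1 ≫ eqToHom _) ≫ (eqToHom _ ≫ n.1 ≫ eqToHom _)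
      simp
    · show eqToHom _ ≫ (m.2 ≫ n.2) ≫ eqToHom _ =
        (eqToHom _ ≫ m.2 ≫ eqToHom _) ≫ (eqToHom _ ≫ n.2 ≫ eqToHom _)
      simp

theorem homM_dn {S T : SymLensObj A B} (j : S ⟶ T) (x : Tilde S) :
    j.homM.toFun (dn S x) = dn T (j.homP.toFun x) := by
  have h : up T (j.homM.toFun (dn S x)) = j.homP.toFun (up S (dn S x)) := j.compat (dn S x)
  rw [up_dn] at h
  rw [← h, dn_up]

def RHom {S T : SymLensObj A B} (j : S ⟶ T) : RObj S ⟶ RObj T where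
  h := RHomFunctor j
  left_comm := CategoryTheory.Functor.ext j.homP.g_comm (fun _ _ _ => rfl)
  right_comm := CategoryTheory.Functor.ext j.homP.f_comm (fun _ _ _ => rfl)
  left_tgt x a u u' hu := j.homP.q_comm x a u u' hu
  left_put x a u u' hu := by
    refine tilde_hom_heq rfl (j.homP.q_comm x a u u' hu) ?_ ?_
    · show HEq (eqToHom _ ≫ (u ≫ eqToHom _) ≫ eqToHom _) (u' ≫ eqToHom _)
      refine ((eqToHom_comp_heq _ _).trans (comp_eqToHom_heq _ _)).trans ?_
      exact ((comp_eqToHom_heq _ _).trans (hu.symm)).trans (comp_eqToHom_heq _ _).symm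
    · show HEq (eqToHom _ ≫ S.mealyAB.f x u ≫ eqToHom _) (T.mealyAB.f (j.homP.toFun x) u')
      refine ((eqToHom_comp_heq _ _).trans (comp_eqToHom_heq _ _)).trans ?_
      exact j.homP.f_map_comm x a u u' hu
  right_tgt x b u u' hu := by
    show j.homP.toFun (up S (S.mealyBA.q (dn S x) (eqToHom (hgf S x) ≫ u))) =
      up T (T.mealyBA.q (dn T (j.homP.toFun x)) (eqToHom (hgf T _) ≫ u'))
    have h1 : up T (j.homM.toFun (S.mealyBA.q (dn S x) (eqToHom (hgf S x) ≫ u))) =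
        j.homP.toFun (up S (S.mealyBA.q (dn S x) (eqToHom (hgf S x) ≫ u))) :=
      j.compat _
    rw [← h1]
    refine congrArg (up T) ?_
    refine (j.homM.q_comm _ b _ (eqToHom ((j.homM.g_comm _).trans (hgf S x)) ≫ u)
      ((eqToHom_comp_heq _ _).trans (eqToHom_comp_heq _ _).symm)).trans ?_
    refine T.mealyBA.q_congr (homM_dn j x) rfl ?_
    refine (eqToHom_comp_heq _ _).trans ?_
    exact (hu.symm).trans (eqToHom_comp_heq _ _).symm
  right_put x b u u' hu := by
    refine tilde_hom_heq rfl ?_ ?_ ?_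
    · show j.homP.toFun (up S (S.mealyBA.q (dn S x) (eqToHom (hgf S x) ≫ u))) =
        up T (T.mealyBA.q (dn T (j.homP.toFun x)) (eqToHom (hgf T _) ≫ u'))
      have h1 : up T (j.homM.toFun (S.mealyBA.q (dn S x) (eqToHom (hgf S x) ≫ u))) =
          j.homP.toFun (up S (S.mealyBA.q (dn S x) (eqToHom (hgf S x) ≫ u))) :=
        j.compat _
      rw [← h1]
      refine congrArg (up T) ?_
      refine (j.homM.q_comm _ b _ (eqToHom ((j.homM.g_comm _).trans (hgf S x)) ≫ u)
        ((eqToHom_comp_heq _ _).trans (eqToHom_comp_heq _ _).symm)).trans ?_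
      refine T.mealyBA.q_congr (homM_dn j x) rfl ?_
      refine (eqToHom_comp_heq _ _).trans ?_
      exact (hu.symm).trans (eqToHom_comp_heq _ _).symm
    · show HEq (eqToHom _ ≫ (eqToHom _ ≫ S.mealyBA.f (dn S x) _ ≫ eqToHom _) ≫ eqToHom _)
        (eqToHom _ ≫ T.mealyBA.f (dn T (j.homP.toFun x)) _ ≫ eqToHom _)
      refine ((eqToHom_comp_heq _ _).trans (comp_eqToHom_heq _ _)).trans ?_
      refine ((eqToHom_comp_heq _ _).trans (comp_eqToHom_heq _ _)).trans ?_
      refine HEq.trans ?_ ((eqToHom_comp_heq _ _).trans (comp_eqToHom_heq _ _)).symm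
      refine (j.homM.f_map_comm _ b _ (eqToHom ((j.homM.g_comm _).trans (hgf S x)) ≫ u)
        ((eqToHom_comp_heq _ _).trans (eqToHom_comp_heq _ _).symm)).trans ?_
      refine T.mealyBA.f_congr (homM_dn j x) rfl ?_
      refine (eqToHom_comp_heq _ _).trans ?_
      exact (hu.symm).trans (eqToHom_comp_heq _ _).symm
    · show HEq (eqToHom _ ≫ (u ≫ eqToHom _) ≫ eqToHom _) (u' ≫ eqToHom _)
      refine ((eqToHom_comp_heq _ _).trans (comp_eqToHom_heq _ _)).trans ?_
      exact ((comp_eqToHom_heq _ _).trans (hu.symm)).trans (comp_eqToHom_heq _ _).symm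

def RF : SymLensObj A B ⥤ SpnLensObj A B where
  obj := RObj
  map := RHom
  map_id S := by
    apply SpnLensHom.ext
    refine Functor.hext (fun x => rfl) (fun x y m => ?_)
    refine tilde_hom_heq rfl rfl ?_ ?_
    · exact (eqToHom_comp_heq _ _).trans (comp_eqToHom_heq _ _)
    · exact (eqToHom_comp_heq _ _).trans (comp_eqToHom_heq _ _)
  map_comp {S T U} j k := by
    apply SpnLensHom.ext
    refine Functor.hext (fun x => rfl) (fun x y m => ?_)
    refine tilde_hom_heq rfl rfl ?_ ?_
    · refine ((eqToHom_comp_heq _ _).trans (comp_eqToHom_heq _ _)).trans (HEq.symm ?_)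
      refine ((eqToHom_comp_heq _ _).trans (comp_eqToHom_heq _ _)).trans ?_
      exact (eqToHom_comp_heq _ _).trans (comp_eqToHom_heq _ _)
    · refine ((eqToHom_comp_heq _ _).trans (comp_eqToHom_heq _ _)).trans (HEq.symm ?_)
      refine ((eqToHom_comp_heq _ _).trans (comp_eqToHom_heq _ _)).trans ?_
      exact (eqToHom_comp_heq _ _).trans (comp_eqToHom_heq _ _)

end SLProof
namespace SLProof

variable {A B : Type u} [Category.{v} A] [Category.{v} B]

/-! ### The hom equivalence -/

def toSpanF {S : SpnLensObj A B} {T : SymLensObj A B} (φ : MObj S ⟶ T) :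
    S.X ⥤ Tilde T where
  obj := φ.homP.toFun
  map {x y} m := (eqToHom (φ.homP.g_comm x) ≫ S.left.get.map m ≫ eqToHom (φ.homP.g_comm y).symm,
    eqToHom (φ.homP.f_comm x) ≫ S.right.get.map m ≫ eqToHom (φ.homP.f_comm y).symm)
  map_id x := by
    apply Prod.ext
    · show eqToHom _ ≫ S.left.get.map (𝟙 x) ≫ eqToHom _ = 𝟙 _
      simp
      exact (eqToHom_trans _ _).trans (eqToHom_refl _ _)
    · show eqToHom _ ≫ S.right.get.map (𝟙 x) ≫ eqToHom _ = 𝟙 _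
      simp
      exact (eqToHom_trans _ _).trans (eqToHom_refl _ _)
  map_comp {x y z} m n := by
    apply Prod.ext
    · show eqToHom _ ≫ S.left.get.map (m ≫ n) ≫ eqToHom _ =
        (eqToHom _ ≫ S.left.get.map m ≫ eqToHom _) ≫ (eqToHom _ ≫ S.left.get.map n ≫ eqToHom _)
      simp
      erw [eqToHom_trans_assoc, eqToHom_refl, Category.id_comp]
    · show eqToHom _ ≫ S.right.get.map (m ≫ n) ≫ eqToHom _ =
        (eqToHom _ ≫ S.right.get.map m ≫ eqToHom _) ≫ (eqToHom _ ≫ S.right.get.map n ≫ eqToHom _)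
      simp
      erw [eqToHom_trans_assoc, eqToHom_refl, Category.id_comp]

theorem toSpan_homM_dn {S : SpnLensObj A B} {T : SymLensObj A B} (φ : MObj S ⟶ T) (x : S.X) :
    φ.homM.toFun x = dn T (φ.homP.toFun x) := by
  have h : up T (φ.homM.toFun x) = φ.homP.toFun x := φ.compat x
  rw [← h, dn_up]

def toSpan {S : SpnLensObj A B} {T : SymLensObj A B} (φ : MObj S ⟶ T) : S ⟶ RObj T where
  h := toSpanF φ
  left_comm := CategoryTheory.Functor.ext φ.homP.g_comm (fun _ _ _ => rfl)
  right_comm := CategoryTheory.Functor.ext φ.homP.f_comm (fun _ _ _ => rfl)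
  left_tgt x a u u' hu := φ.homP.q_comm x a u u' hu
  left_put x a u u' hu := by
    refine tilde_hom_heq rfl (φ.homP.q_comm x a u u' hu) ?_ ?_
    · show HEq (eqToHom _ ≫ S.left.get.map (S.left.put x u) ≫ eqToHom _) (u' ≫ eqToHom _)
      refine ((eqToHom_comp_heq _ _).trans (comp_eqToHom_heq _ _)).trans ?_
      exact ((S.left.putget x u).trans hu.symm).trans (comp_eqToHom_heq _ _).symm
    · show HEq (eqToHom _ ≫ S.right.get.map (S.left.put x u) ≫ eqToHom _)
        (T.mealyAB.f (φ.homP.toFun x) u')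
      refine ((eqToHom_comp_heq _ _).trans (comp_eqToHom_heq _ _)).trans ?_
      exact φ.homP.f_map_comm x a u u' hu
  right_tgt x b u u' hu := by
    show φ.homP.toFun (S.right.tgt x u) =
      up T (T.mealyBA.q (dn T (φ.homP.toFun x)) (eqToHom (hgf T _) ≫ u'))
    have h1 : up T (φ.homM.toFun (S.right.tgt x u)) = φ.homP.toFun (S.right.tgt x u) :=
      φ.compat _
    rw [← h1]
    refine congrArg (up T) ?_
    refine (φ.homM.q_comm x b u (eqToHom (φ.homM.g_comm x) ≫ u)
      (eqToHom_comp_heq _ _)).trans ?_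
    refine T.mealyBA.q_congr (toSpan_homM_dn φ x) rfl ?_
    refine (eqToHom_comp_heq _ _).trans ?_
    exact (hu.symm).trans (eqToHom_comp_heq _ _).symm
  right_put x b u u' hu := by
    refine tilde_hom_heq rfl ?_ ?_ ?_
    · show φ.homP.toFun (S.right.tgt x u) =
        up T (T.mealyBA.q (dn T (φ.homP.toFun x)) (eqToHom (hgf T _) ≫ u'))
      have h1 : up T (φ.homM.toFun (S.right.tgt x u)) = φ.homP.toFun (S.right.tgt x u) :=
        φ.compat _
      rw [← h1]
      refine congrArg (up T) ?_
      refine (φ.homM.q_comm x b u (eqToHom (φ.homM.g_comm x) ≫ u)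
        (eqToHom_comp_heq _ _)).trans ?_
      refine T.mealyBA.q_congr (toSpan_homM_dn φ x) rfl ?_
      refine (eqToHom_comp_heq _ _).trans ?_
      exact (hu.symm).trans (eqToHom_comp_heq _ _).symm
    · show HEq (eqToHom _ ≫ S.left.get.map (S.right.put x u) ≫ eqToHom _)
        (eqToHom _ ≫ T.mealyBA.f (dn T (φ.homP.toFun x)) _ ≫ eqToHom _)
      refine ((eqToHom_comp_heq _ _).trans (comp_eqToHom_heq _ _)).trans ?_
      refine HEq.trans ?_ ((eqToHom_comp_heq _ _).trans (comp_eqToHom_heq _ _)).symm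
      refine (φ.homM.f_map_comm x b u (eqToHom (φ.homM.g_comm x) ≫ u)
        (eqToHom_comp_heq _ _)).trans ?_
      refine T.mealyBA.f_congr (toSpan_homM_dn φ x) rfl ?_
      refine (eqToHom_comp_heq _ _).trans ?_
      exact (hu.symm).trans (eqToHom_comp_heq _ _).symm
    · show HEq (eqToHom _ ≫ S.right.get.map (S.right.put x u) ≫ eqToHom _) (u' ≫ eqToHom _)
      refine ((eqToHom_comp_heq _ _).trans (comp_eqToHom_heq _ _)).trans ?_
      exact ((S.right.putget x u).trans hu.symm).trans (comp_eqToHom_heq _ _).symm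

def toSym {S : SpnLensObj A B} {T : SymLensObj A B} (ψ : S ⟶ RObj T) : MObj S ⟶ T where
  homP :=
  { toFun := ψ.h.obj
    g_comm := fun x => Functor.congr_obj ψ.left_comm x
    f_comm := fun x => Functor.congr_obj ψ.right_comm x
    q_comm := fun x a u u' hu => ψ.left_tgt x a u u' hu
    f_map_comm := fun x a u u' hu => by
      show HEq (S.right.get.map (S.left.put x u)) (T.mealyAB.f (ψ.h.obj x) u')
      refine (functor_map_heq ψ.right_comm.symm (S.left.put x u)).trans ?_
      exact tilde_hom_heq_snd rfl (ψ.left_tgt x a u u' hu) (ψ.left_put x a u u' hu) }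
  homM :=
  { toFun := fun x => dn T (ψ.h.obj x)
    g_comm := fun x => (hgf T _).trans (Functor.congr_obj ψ.right_comm x)
    f_comm := fun x => (hfg T _).trans (Functor.congr_obj ψ.left_comm x)
    q_comm := fun x b u u' hu => by
      show dn T (ψ.h.obj (S.right.tgt x u)) = T.mealyBA.q (dn T (ψ.h.obj x)) u'
      have h2 := ψ.right_tgt x b u (eqToHom (Functor.congr_obj ψ.right_comm x) ≫ u)
        (eqToHom_comp_heq _ _)
      rw [h2]
      show dn T (up T (T.mealyBA.q (dn T (ψ.h.obj x)) _)) = _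
      rw [dn_up]
      refine T.mealyBA.q_congr rfl rfl ?_
      refine (eqToHom_comp_heq _ _).trans ((eqToHom_comp_heq _ _).trans hu.symm)
    f_map_comm := fun x b u u' hu => by
      show HEq (S.left.get.map (S.right.put x u)) (T.mealyBA.f (dn T (ψ.h.obj x)) u')
      refine (functor_map_heq ψ.left_comm.symm (S.right.put x u)).trans ?_
      refine (tilde_hom_heq_fst rfl
        (ψ.right_tgt x b u (eqToHom (Functor.congr_obj ψ.right_comm x) ≫ u)
          (eqToHom_comp_heq _ _))
        (ψ.right_put x b u (eqToHom (Functor.congr_obj ψ.right_comm x) ≫ u)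
          (eqToHom_comp_heq _ _))).trans ?_
      show HEq (eqToHom _ ≫ T.mealyBA.f (dn T (ψ.h.obj x)) _ ≫ eqToHom _) _
      refine ((eqToHom_comp_heq _ _).trans (comp_eqToHom_heq _ _)).trans ?_
      refine T.mealyBA.f_congr rfl rfl ?_
      refine (eqToHom_comp_heq _ _).trans ((eqToHom_comp_heq _ _).trans hu.symm) }
  compat x := up_dn T _

def coreEquiv : Adjunction.CoreHomEquiv (MF (A := A) (B := B)) RF where
  homEquiv S T :=
  { toFun := toSpan
    invFun := toSym
    left_inv := fun φ => by
      apply SymLensHom.ext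
      · apply MealyHom.ext; rfl
      · apply MealyHom.ext
        funext x
        exact (toSpan_homM_dn φ x).symm
    right_inv := fun ψ => by
      apply SpnLensHom.ext
      refine Functor.hext (fun x => rfl) (fun x y m => ?_)
      refine tilde_hom_heq rfl rfl ?_ ?_
      · refine ((eqToHom_comp_heq _ _).trans (comp_eqToHom_heq _ _)).trans ?_
        exact functor_map_heq ψ.left_comm.symm m
      · refine ((eqToHom_comp_heq _ _).trans (comp_eqToHom_heq _ _)).trans ?_
        exact functor_map_heq ψ.right_comm.symm m }
  homEquiv_naturality_left_symm := fun f g => by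
    apply SymLensHom.ext <;> apply MealyHom.ext <;> rfl
  homEquiv_naturality_right := fun φ g => by
    apply SpnLensHom.ext
    refine Functor.hext (fun x => rfl) (fun x y m => ?_)
    refine tilde_hom_heq rfl rfl ?_ ?_
    · refine ((eqToHom_comp_heq _ _).trans (comp_eqToHom_heq _ _)).trans (HEq.symm ?_)
      refine ((eqToHom_comp_heq _ _).trans (comp_eqToHom_heq _ _)).trans ?_
      exact (eqToHom_comp_heq _ _).trans (comp_eqToHom_heq _ _)
    · refine ((eqToHom_comp_heq _ _).trans (comp_eqToHom_heq _ _)).trans (HEq.symm ?_)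
      refine ((eqToHom_comp_heq _ _).trans (comp_eqToHom_heq _ _)).trans ?_
      exact (eqToHom_comp_heq _ _).trans (comp_eqToHom_heq _ _)

def adjMR : MF (A := A) (B := B) ⊣ RF := Adjunction.mkOfHomEquiv coreEquiv

end SLProof
namespace SLProof

theorem _root_.Mealy.ext' {A : Type u₁} {B : Type u₂} [Category.{v₁} A] [Category.{v₂} B]
    {m₁ m₂ : Mealy A B} (h : m₁.X₀ = m₂.X₀)
    (hg : ∀ x, m₁.g₀ x = m₂.g₀ (cast h x))
    (hf : ∀ x, m₁.f₀ x = m₂.f₀ (cast h x))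
    (hq : ∀ (x : m₁.X₀) (a : A) (u : m₁.g₀ x ⟶ a) (u' : m₂.g₀ (cast h x) ⟶ a),
      HEq u u' → cast h (m₁.q x u) = m₂.q (cast h x) u')
    (hfm : ∀ (x : m₁.X₀) (a : A) (u : m₁.g₀ x ⟶ a) (u' : m₂.g₀ (cast h x) ⟶ a),
      HEq u u' → HEq (m₁.f x u) (m₂.f (cast h x) u')) : m₁ = m₂ := by
  obtain ⟨X₁, g₁, f₁, q₁, fm₁, _, _, _, _, _⟩ := m₁
  obtain ⟨X₂, g₂, f₂, q₂, fm₂, _, _, _, _, _⟩ := m₂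
  dsimp at h hg hf hq hfm
  subst h
  have hg' : g₁ = g₂ := funext fun x => hg x
  subst hg'
  have hf' : f₁ = f₂ := funext fun x => hf x
  subst hf'
  have hq' : @q₁ = @q₂ := by
    funext x a u
    exact hq x a u u HEq.rfl
  subst hq'
  have hfm' : @fm₁ = @fm₂ := by
    funext x a u
    exact eq_of_heq (hfm x a u u HEq.rfl)
  subst hfm'
  rfl

variable {A B : Type u} [Category.{v} A] [Category.{v} B]

theorem symLensObj_ext {S T : SymLensObj A B}
    (h1 : S.mealyAB = T.mealyAB) (h2 : S.mealyBA = T.mealyBA) : S = T := by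
  obtain ⟨p, n, _, _, _⟩ := S
  obtain ⟨p', n', _, _, _⟩ := T
  dsimp at h1 h2
  subst h1; subst h2
  rfl

theorem MR_obj (T : SymLensObj A B) : MF.obj (RF.obj T) = T := by
  refine symLensObj_ext rfl (Mealy.ext' T.obj_eq.symm ?_ ?_ ?_ ?_)
  · exact fun x => (hgf T x).symm
  · exact fun x => (hfg T x).symm
  · intro x b u u' hu
    show dn T (up T (T.mealyBA.q (dn T x) (eqToHom (hgf T x) ≫ u))) = _
    rw [dn_up]
    exact T.mealyBA.q_congr rfl rfl ((eqToHom_comp_heq _ _).trans hu)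
  · intro x b u u' hu
    show HEq (eqToHom _ ≫ T.mealyBA.f (dn T x) (eqToHom (hgf T x) ≫ u) ≫ eqToHom _) _
    refine ((eqToHom_comp_heq _ _).trans (comp_eqToHom_heq _ _)).trans ?_
    exact T.mealyBA.f_congr rfl rfl ((eqToHom_comp_heq _ _).trans hu)

theorem symLensHom_heq {S S' T T' : SymLensObj A B} (hS : S = S') (hT : T = T')
    (f : S ⟶ T) (g : S' ⟶ T') (h1 : HEq f.homP.toFun g.homP.toFun)
    (h2 : HEq f.homM.toFun g.homM.toFun) : HEq f g := by
  subst hS; subst hT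
  rw [show f = g from
    SymLensHom.ext (MealyHom.ext (eq_of_heq h1)) (MealyHom.ext (eq_of_heq h2))]

theorem hRM : RF ⋙ MF = 𝟭 (SymLensObj A B) := by
  refine Functor.hext MR_obj (fun {T T'} j => ?_)
  refine symLensHom_heq (MR_obj T) (MR_obj T') _ _ HEq.rfl ?_
  show HEq (j.homP.toFun : Tilde T → Tilde T') j.homM.toFun
  refine Function.hfunext T.obj_eq.symm (fun x y hxy => ?_)
  have hx : x = up T y := eq_of_heq (hxy.trans (cast_heq T.obj_eq y).symm)
  subst hx
  have h : up T' (j.homM.toFun y) = j.homP.toFun (up T y) := j.compat y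
  rw [← h]
  exact cast_heq _ _

/-! ### The counit is invertible -/

def counitInv (T : SymLensObj A B) : T ⟶ MF.obj (RF.obj T) where
  homP :=
  { toFun := fun x => x
    g_comm := fun _ => rfl
    f_comm := fun _ => rfl
    q_comm := fun x a u u' hu => T.mealyAB.q_congr rfl rfl hu.symm
    f_map_comm := fun x a u u' hu => T.mealyAB.f_congr rfl rfl hu.symm }
  homM :=
  { toFun := fun y => up T y
    g_comm := fun y => (up_g T y).symm
    f_comm := fun y => (up_f T y).symm
    q_comm := fun y b u u' hu => by
      show up T (T.mealyBA.q y u) =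
        up T (T.mealyBA.q (dn T (up T y)) (eqToHom (hgf T _) ≫ u'))
      refine congrArg (up T) ?_
      refine T.mealyBA.q_congr (dn_up T y).symm rfl ?_
      exact (hu.symm).trans (eqToHom_comp_heq _ _).symm
    f_map_comm := fun y b u u' hu => by
      show HEq (T.mealyBA.f y u)
        (eqToHom _ ≫ T.mealyBA.f (dn T (up T y)) (eqToHom (hgf T _) ≫ u') ≫ eqToHom _)
      refine HEq.trans ?_ ((eqToHom_comp_heq _ _).trans (comp_eqToHom_heq _ _)).symm
      refine T.mealyBA.f_congr (dn_up T y).symm rfl ?_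
      exact (hu.symm).trans (eqToHom_comp_heq _ _).symm }
  compat := fun y => rfl

theorem counit_isIso (T : SymLensObj A B) : IsIso (adjMR.counit.app T) := by
  have hc : adjMR.counit.app T = toSym (𝟙 (RObj T)) := rfl
  rw [hc]
  refine ⟨counitInv T, ?_, ?_⟩
  · apply SymLensHom.ext
    · apply MealyHom.ext; rfl
    · apply MealyHom.ext
      funext x
      exact up_dn T x
  · apply SymLensHom.ext
    · apply MealyHom.ext; rfl
    · apply MealyHom.ext
      funext y
      exact dn_up T y

end SLProof
namespace SLProof

variable {A B : Type u} [Category.{v} A] [Category.{v} B]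

theorem mdescr : MDescr (MF (A := A) (B := B)) := by
  intro S
  refine ⟨rfl, rfl, fun x => rfl, fun x => rfl, ?_, fun x => rfl, fun x => rfl, ?_⟩
  · intro x a u u' hu
    cases eq_of_heq hu
    exact ⟨rfl, HEq.rfl⟩
  · intro x b u u' hu
    cases eq_of_heq hu
    exact ⟨rfl, HEq.rfl⟩

theorem imgdescr : ImageSpanDescr (RF (A := A) (B := B)) := by
  intro S
  refine ⟨rfl, fun x => rfl, fun x => rfl, ?_, ?_, ?_⟩
  · intro x y u v
    exact ⟨(u, v), ⟨rfl, rfl⟩, fun w hw => Prod.ext hw.1 hw.2⟩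
  · intro x a u u' hu
    cases eq_of_heq hu
    exact ⟨rfl, HEq.rfl⟩
  · intro x b u u' hu
    constructor
    · show up S (S.mealyBA.q (dn S x) (eqToHom (hgf S x) ≫ u)) = cast S.obj_eq _
      refine congrArg (cast S.obj_eq) ?_
      exact S.mealyBA.q_congr rfl rfl ((eqToHom_comp_heq _ _).trans hu.symm)
    · show HEq (eqToHom _ ≫ S.mealyBA.f (dn S x) (eqToHom (hgf S x) ≫ u) ≫ eqToHom _) _
      refine ((eqToHom_comp_heq _ _).trans (comp_eqToHom_heq _ _)).trans ?_
      exact S.mealyBA.f_congr rfl rfl ((eqToHom_comp_heq _ _).trans hu.symm)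

end SLProof


/-- For small categories `A` and `B` there is an adjunction `M ⊣ R` between the category
of spans of asymmetric lenses and the category of symmetric lenses, where `M` takes the
underlying symmetric lens of a span and `R` is built from the bo-ff factorisation of
`⟨g₀, f₀⟩ : X₀ → A × B` (so that the legs of `R S` are jointly fully faithful), with
`M R = 1`; in particular `R` is fully faithful and `SymLens(A,B)` is a reflective
subcategory of `SpnLens(A,B)`. -/
theorem symLens_reflective {A B : Type u} [Category.{v} A] [Category.{v} B] :
    ∃ (M : SpnLensObj A B ⥤ SymLensObj A B) (R : SymLensObj A B ⥤ SpnLensObj A B)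
      (_ : M ⊣ R),
      MDescr M ∧ ImageSpanDescr R ∧ R ⋙ M = 𝟭 (SymLensObj A B) ∧
      R.Full ∧ R.Faithful := by
  refine ⟨SLProof.MF, SLProof.RF, SLProof.adjMR, SLProof.mdescr, SLProof.imgdescr,
    SLProof.hRM, ?_, ?_⟩
  · have : IsIso (SLProof.adjMR (A := A) (B := B)).counit := by
      have : ∀ T, IsIso ((SLProof.adjMR (A := A) (B := B)).counit.app T) :=
        SLProof.counit_isIso
      exact NatIso.isIso_of_isIso_app _
    exact (SLProof.adjMR.fullyFaithfulROfIsIsoCounit).full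
  · exact Functor.Faithful.of_comp_eq SLProof.hRM
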